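/- Let G be the d-dimensional grid graph with side lengths (n₁, …, n_d), let E and F be two distinct vertices, and let V₁ = {U : d_G(U,E) ≤ d_G(U,F)}. Let G₁ be the subgraph of G induced on V₁. Then the metric dimension of G₁ is at most d. Moreover, after relabeling coordinates so that |x_E^(1) − x_F^(1)| is maximal among all coordinates and reflecting so that x_E^(i) ≤ x_F^(i) for all i, the d corners O₁ = (1,…,1) and O_j (obtained from O₁ by replacing the j-th coordinate by n_j), j = 2,…,d, all lie in V₁ and form a resolving set of G₁, with d_{G₁}(X, O_j) = d_G(X, O_j) for every X ∈ V₁. -/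

import Mathlib

/-- A set `R` of vertices resolves the graph `H` if every pair of distinct
vertices is distinguished by some vertex of `R`. -/
def resolves {V : Type*} (H : SimpleGraph V) (R : Set V) : Prop :=
  ∀ a b : V, a ≠ b → ∃ x ∈ R, H.dist a x ≠ H.dist b x

/-- The metric dimension: the least cardinality of a (finite) resolving set. -/
noncomputable def metricDim {V : Type*} (H : SimpleGraph V) : ℕ :=
  sInf {k | ∃ R : Finset V, R.card = k ∧ resolves H (R : Set V)}

/-- The `d`-dimensional grid graph with side lengths `n 0, …, n (d-1)`: vertices are
tuples `(x 0, …, x (d-1))` with `x i ∈ Fin (n i)` (representing the coordinate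
`x i + 1 ∈ {1, …, n i}`), two vertices being adjacent when they differ by exactly 1
in exactly one coordinate, i.e. when their ℓ¹ distance is 1. -/
def gridGraph {d : ℕ} (n : Fin d → ℕ) : SimpleGraph (∀ i, Fin (n i)) where
  Adj x y := (∑ i, |((x i : ℕ) : ℤ) - ((y i : ℕ) : ℤ)|) = 1
  symm := by
    constructor
    intro x y h
    beta_reduce at h ⊢
    rw [show (∑ i, |((y i : ℕ) : ℤ) - ((x i : ℕ) : ℤ)|)
        = ∑ i, |((x i : ℕ) : ℤ) - ((y i : ℕ) : ℤ)| from
      Finset.sum_congr rfl fun i _ => abs_sub_comm _ _]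
    exact h
  loopless := by constructor; intro x h; simp at h

/-- The corner `O j` of the grid: `O 0 = (1,…,1)` (all `Fin`-values 0) and, for
`j ≠ 0`, `O j` is obtained from `O 0` by replacing the `j`-th coordinate by `n j`
(the `Fin`-value `n j − 1`). -/
def gridCorner {d : ℕ} (n : Fin d → ℕ) (hn : ∀ i, 0 < n i) (j : Fin d) :
    ∀ i, Fin (n i) := fun i =>
  if (i : ℕ) = (j : ℕ) ∧ (j : ℕ) ≠ 0 then ⟨n i - 1, Nat.sub_lt (hn i) one_pos⟩
  else ⟨0, hn i⟩

namespace Stmt10Aux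

variable {d : ℕ} {n : Fin d → ℕ}

def l1 (x y : ∀ i, Fin (n i)) : ℕ := ∑ i, Nat.dist (x i) (y i)

lemma abs_cast (a b : ℕ) : |(a:ℤ) - (b:ℤ)| = (Nat.dist a b : ℤ) := by
  rcases le_total a b with h | h
  · rw [abs_of_nonpos (by omega : (a:ℤ) - b ≤ 0)]
    unfold Nat.dist; omega
  · rw [abs_of_nonneg (by omega : (0:ℤ) ≤ (a:ℤ) - b)]
    unfold Nat.dist; omega

lemma adj_iff {x y : ∀ i, Fin (n i)} : (gridGraph n).Adj x y ↔ l1 x y = 1 := by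
  show (∑ i, |((x i : ℕ) : ℤ) - ((y i : ℕ) : ℤ)|) = 1 ↔ _
  rw [Finset.sum_congr rfl fun i _ => abs_cast _ _, ← Nat.cast_sum]
  exact ⟨fun h => by exact_mod_cast h, fun h => by exact_mod_cast h⟩

lemma l1_self (x : ∀ i, Fin (n i)) : l1 x x = 0 := by
  simp [l1, Nat.dist_self]

lemma l1_comm (x y : ∀ i, Fin (n i)) : l1 x y = l1 y x :=
  Finset.sum_congr rfl fun i _ => Nat.dist_comm _ _

lemma l1_triangle (x y z : ∀ i, Fin (n i)) : l1 x z ≤ l1 x y + l1 y z := by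
  rw [l1, l1, l1, ← Finset.sum_add_distrib]
  exact Finset.sum_le_sum fun i _ => Nat.dist.triangle_inequality _ _ _

lemma l1_update (x y : ∀ i, Fin (n i)) (i : Fin d) (v : Fin (n i)) :
    l1 (Function.update x i v) y + Nat.dist (x i) (y i)
      = l1 x y + Nat.dist (v : ℕ) (y i) := by
  have h1 : l1 (Function.update x i v) y
      = Nat.dist (v : ℕ) (y i) + ∑ k ∈ Finset.univ.erase i, Nat.dist (x k) (y k) := by
    rw [l1, ← Finset.add_sum_erase _ _ (Finset.mem_univ i)]
    congr 1
    · rw [Function.update_self]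
    · exact Finset.sum_congr rfl fun k hk => by
        rw [Function.update_of_ne (Finset.ne_of_mem_erase hk)]
  have h2 : l1 x y
      = Nat.dist (x i : ℕ) (y i) + ∑ k ∈ Finset.univ.erase i, Nat.dist (x k) (y k) := by
    rw [l1, ← Finset.add_sum_erase _ _ (Finset.mem_univ i)]
  omega

lemma l1_le_length {a b : ∀ i, Fin (n i)} (w : (gridGraph n).Walk a b) :
    l1 a b ≤ w.length := by
  induction w with
  | nil => simp [l1_self]
  | @cons u v w h p ih =>
    have h1 : l1 u v = 1 := adj_iff.mp h
    have := l1_triangle u v w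
    rw [SimpleGraph.Walk.length_cons]
    omega

/-- one unit step at coordinate `i` toward target value `t i`. -/
lemma step_coord (x t : ∀ i, Fin (n i)) (i : Fin d) (h : x i ≠ t i) :
    ∃ v : Fin (n i), (gridGraph n).Adj x (Function.update x i v) ∧
      l1 (Function.update x i v) t + 1 = l1 x t ∧
      (((t i : ℕ) < (x i : ℕ) ∧ (v : ℕ) = (x i : ℕ) - 1) ∨
        ((x i : ℕ) < (t i : ℕ) ∧ (v : ℕ) = (x i : ℕ) + 1)) := by
  have hv : ((x i : ℕ) ≠ (t i : ℕ)) := fun hc => h (Fin.ext hc)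
  rcases lt_or_gt_of_ne hv with hlt | hgt
  · refine ⟨⟨(x i : ℕ) + 1, lt_of_le_of_lt hlt (t i).isLt⟩, ?_, ?_, Or.inr ⟨hlt, rfl⟩⟩
    · rw [adj_iff]
      have := l1_update x x i ⟨(x i : ℕ) + 1, lt_of_le_of_lt hlt (t i).isLt⟩
      have hs := l1_self x
      have hd : Nat.dist ((x i : ℕ) + 1) (x i : ℕ) = 1 := by unfold Nat.dist; omega
      have hc := l1_comm x (Function.update x i ⟨(x i : ℕ) + 1, lt_of_le_of_lt hlt (t i).isLt⟩)
      simp only [Nat.dist_self] at this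
      omega
    · have := l1_update x t i ⟨(x i : ℕ) + 1, lt_of_le_of_lt hlt (t i).isLt⟩
      simp only [Fin.val_mk] at this
      have hd1 : Nat.dist (x i : ℕ) (t i : ℕ) = Nat.dist ((x i : ℕ) + 1) (t i : ℕ) + 1 := by
        unfold Nat.dist; omega
      omega
  · have hx0 : 0 < (x i : ℕ) := by omega
    refine ⟨⟨(x i : ℕ) - 1, by omega⟩, ?_, ?_, Or.inl ⟨hgt, rfl⟩⟩
    · rw [adj_iff]
      have := l1_update x x i ⟨(x i : ℕ) - 1, by omega⟩
      have hs := l1_self x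
      have hd : Nat.dist ((x i : ℕ) - 1) (x i : ℕ) = 1 := by unfold Nat.dist; omega
      have hc := l1_comm x (Function.update x i ⟨(x i : ℕ) - 1, by omega⟩)
      simp only [Nat.dist_self] at this
      omega
    · have := l1_update x t i ⟨(x i : ℕ) - 1, by omega⟩
      simp only [Fin.val_mk] at this
      have hd1 : Nat.dist (x i : ℕ) (t i : ℕ) = Nat.dist ((x i : ℕ) - 1) (t i : ℕ) + 1 := by
        unfold Nat.dist; omega
      omega

lemma walk_of_step (s : Set (∀ i, Fin (n i))) (t : ∀ i, Fin (n i)) (ht : t ∈ s)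
    (hstep : ∀ x ∈ s, x ≠ t →
      ∃ x', x' ∈ s ∧ (gridGraph n).Adj x x' ∧ l1 x' t + 1 = l1 x t) :
    ∀ (N : ℕ) (x : ∀ i, Fin (n i)) (hx : x ∈ s), l1 x t = N →
      ∃ w : ((gridGraph n).induce s).Walk ⟨x, hx⟩ ⟨t, ht⟩, w.length = N := by
  intro N
  induction N with
  | zero =>
    intro x hx h0
    have hxt : x = t := by
      by_contra hne
      obtain ⟨x', _, _, hp⟩ := hstep x hx hne
      omega
    subst hxt
    exact ⟨SimpleGraph.Walk.nil, rfl⟩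
  | succ N ih =>
    intro x hx h
    have hne : x ≠ t := by
      rintro rfl
      rw [l1_self] at h
      omega
    obtain ⟨x', hx', hadj, hp⟩ := hstep x hx hne
    obtain ⟨w, hw⟩ := ih x' hx' (by omega)
    refine ⟨SimpleGraph.Walk.cons ?_ w, by rw [SimpleGraph.Walk.length_cons, hw]⟩
    exact hadj

def induceHom (s : Set (∀ i, Fin (n i))) : (gridGraph n).induce s →g gridGraph n :=
  ⟨Subtype.val, fun h => h⟩

lemma plain_step (t : ∀ i, Fin (n i)) :
    ∀ x ∈ (Set.univ : Set (∀ i, Fin (n i))), x ≠ t →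
      ∃ x', x' ∈ (Set.univ : Set (∀ i, Fin (n i))) ∧
        (gridGraph n).Adj x x' ∧ l1 x' t + 1 = l1 x t := by
  intro x _ hne
  obtain ⟨i, hi⟩ := Function.ne_iff.mp hne
  obtain ⟨v, hadj, hprog, _⟩ := step_coord x t i hi
  exact ⟨Function.update x i v, trivial, hadj, hprog⟩

lemma exists_grid_walk (x t : ∀ i, Fin (n i)) :
    ∃ w : (gridGraph n).Walk x t, w.length = l1 x t := by
  obtain ⟨w, hw⟩ := walk_of_step Set.univ t trivial (plain_step t) (l1 x t) x trivial rfl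
  exact ⟨(w.map (induceHom Set.univ)), by exact (SimpleGraph.Walk.length_map _ _).trans hw⟩

lemma grid_dist (x t : ∀ i, Fin (n i)) : (gridGraph n).dist x t = l1 x t := by
  obtain ⟨w, hw⟩ := exists_grid_walk x t
  refine le_antisymm (hw ▸ SimpleGraph.dist_le w) ?_
  obtain ⟨p, hp⟩ := (SimpleGraph.Walk.reachable w).exists_walk_length_eq_dist
  rw [← hp]
  exact l1_le_length p

lemma induce_dist (s : Set (∀ i, Fin (n i))) (t : ∀ i, Fin (n i)) (ht : t ∈ s)
    (hstep : ∀ x ∈ s, x ≠ t →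
      ∃ x', x' ∈ s ∧ (gridGraph n).Adj x x' ∧ l1 x' t + 1 = l1 x t)
    (x : ∀ i, Fin (n i)) (hx : x ∈ s) :
    ((gridGraph n).induce s).dist ⟨x, hx⟩ ⟨t, ht⟩ = l1 x t := by
  obtain ⟨w, hw⟩ := walk_of_step s t ht hstep (l1 x t) x hx rfl
  refine le_antisymm (hw ▸ SimpleGraph.dist_le w) ?_
  obtain ⟨p, hp⟩ := (SimpleGraph.Walk.reachable w).exists_walk_length_eq_dist
  rw [← hp]
  have := l1_le_length (p.map (induceHom s))
  rwa [SimpleGraph.Walk.length_map] at this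

def lo (hn : ∀ i, 0 < n i) (E F : ∀ i, Fin (n i)) (i : Fin d) : Fin (n i) :=
  if (E i : ℕ) ≤ (F i : ℕ) then ⟨0, hn i⟩ else ⟨n i - 1, Nat.sub_lt (hn i) one_pos⟩

def hi' (hn : ∀ i, 0 < n i) (E F : ∀ i, Fin (n i)) (i : Fin d) : Fin (n i) :=
  if (E i : ℕ) ≤ (F i : ℕ) then ⟨n i - 1, Nat.sub_lt (hn i) one_pos⟩ else ⟨0, hn i⟩

variable (hn : ∀ i, 0 < n i) (E F : ∀ i, Fin (n i))

lemma lo_term (i : Fin d) :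
    Nat.dist (lo hn E F i : ℕ) (E i : ℕ) + Nat.dist (E i : ℕ) (F i : ℕ)
      = Nat.dist (lo hn E F i : ℕ) (F i : ℕ) := by
  have h1 := (E i).isLt; have h2 := (F i).isLt
  rcases le_or_gt (E i : ℕ) (F i : ℕ) with h | h
  · simp only [lo, if_pos h, Fin.val_mk]; unfold Nat.dist; omega
  · simp only [lo, if_neg (by omega : ¬ (E i : ℕ) ≤ (F i : ℕ)), Fin.val_mk]
    unfold Nat.dist; omega

lemma lo_hi (i : Fin d) (u : Fin (n i)) :
    Nat.dist (u : ℕ) (lo hn E F i : ℕ) + Nat.dist (u : ℕ) (hi' hn E F i : ℕ) = n i - 1 := by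
  have h1 := u.isLt
  rcases le_or_gt (E i : ℕ) (F i : ℕ) with h | h
  · simp only [lo, hi', if_pos h, Fin.val_mk]; unfold Nat.dist; omega
  · simp only [lo, hi', if_neg (by omega : ¬ (E i : ℕ) ≤ (F i : ℕ)), Fin.val_mk]
    unfold Nat.dist; omega

lemma lo_inj (i : Fin d) (u w : Fin (n i))
    (h : Nat.dist (u : ℕ) (lo hn E F i : ℕ) = Nat.dist (w : ℕ) (lo hn E F i : ℕ)) :
    u = w := by
  have h1 := u.isLt; have h2 := w.isLt
  apply Fin.ext
  rcases le_or_gt (E i : ℕ) (F i : ℕ) with hc | hc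
  · simp only [lo, if_pos hc, Fin.val_mk] at h; unfold Nat.dist at h; omega
  · simp only [lo, if_neg (by omega : ¬ (E i : ℕ) ≤ (F i : ℕ)), Fin.val_mk] at h
    unfold Nat.dist at h; omega

lemma inV_update (x : ∀ i, Fin (n i)) (i : Fin d) (v : Fin (n i))
    (hcross : Nat.dist (v : ℕ) (E i : ℕ) + Nat.dist (x i : ℕ) (F i : ℕ)
      ≤ Nat.dist (x i : ℕ) (E i : ℕ) + Nat.dist (v : ℕ) (F i : ℕ))
    (hx : l1 x E ≤ l1 x F) :
    l1 (Function.update x i v) E ≤ l1 (Function.update x i v) F := by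
  have h1 := l1_update x E i v
  have h2 := l1_update x F i v
  omega

lemma mem_base (x : ∀ i, Fin (n i)) (hx : ∀ i, x i = lo hn E F i) :
    l1 x E ≤ l1 x F :=
  Finset.sum_le_sum fun i _ => by rw [hx i]; have := lo_term hn E F i; omega

lemma mem_of_eq_lo (j₀ j : Fin d)
    (hmax : ∀ i, Nat.dist (E i : ℕ) (F i : ℕ) ≤ Nat.dist (E j₀ : ℕ) (F j₀ : ℕ))
    (hj : j ≠ j₀) (x : ∀ i, Fin (n i)) (hx : ∀ i, i ≠ j → x i = lo hn E F i) :
    l1 x E ≤ l1 x F := by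
  have hcongrE : ∑ i ∈ Finset.univ.erase j, Nat.dist (x i : ℕ) (E i : ℕ)
      = ∑ i ∈ Finset.univ.erase j, Nat.dist (lo hn E F i : ℕ) (E i : ℕ) :=
    Finset.sum_congr rfl fun i hi => by rw [hx i (Finset.mem_erase.mp hi).1]
  have hcongrF : ∑ i ∈ Finset.univ.erase j, Nat.dist (x i : ℕ) (F i : ℕ)
      = ∑ i ∈ Finset.univ.erase j, Nat.dist (lo hn E F i : ℕ) (F i : ℕ) :=
    Finset.sum_congr rfl fun i hi => by rw [hx i (Finset.mem_erase.mp hi).1]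
  have hsplitE : l1 x E = Nat.dist (x j : ℕ) (E j : ℕ)
      + ∑ i ∈ Finset.univ.erase j, Nat.dist (lo hn E F i : ℕ) (E i : ℕ) := by
    rw [l1, ← Finset.add_sum_erase _ _ (Finset.mem_univ j), hcongrE]
  have hsplitF : l1 x F = Nat.dist (x j : ℕ) (F j : ℕ)
      + ∑ i ∈ Finset.univ.erase j, Nat.dist (lo hn E F i : ℕ) (F i : ℕ) := by
    rw [l1, ← Finset.add_sum_erase _ _ (Finset.mem_univ j), hcongrF]
  have hsum : ∑ i ∈ Finset.univ.erase j, Nat.dist (lo hn E F i : ℕ) (E i : ℕ)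
        + ∑ i ∈ Finset.univ.erase j, Nat.dist (E i : ℕ) (F i : ℕ)
      = ∑ i ∈ Finset.univ.erase j, Nat.dist (lo hn E F i : ℕ) (F i : ℕ) := by
    rw [← Finset.sum_add_distrib]
    exact Finset.sum_congr rfl fun i _ => lo_term hn E F i
  have htri : Nat.dist (x j : ℕ) (E j : ℕ)
      ≤ Nat.dist (x j : ℕ) (F j : ℕ) + Nat.dist (F j : ℕ) (E j : ℕ) :=
    Nat.dist.triangle_inequality _ _ _
  have hcomm := Nat.dist_comm (F j : ℕ) (E j : ℕ)
  have hsingle : Nat.dist (E j₀ : ℕ) (F j₀ : ℕ)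
      ≤ ∑ i ∈ Finset.univ.erase j, Nat.dist (E i : ℕ) (F i : ℕ) :=
    Finset.single_le_sum (f := fun i => Nat.dist (E i : ℕ) (F i : ℕ)) (fun i _ => Nat.zero_le _)
      (Finset.mem_erase.mpr ⟨Ne.symm hj, Finset.mem_univ _⟩)
  have hmj := hmax j
  omega

lemma master_step (j₀ : Fin d)
    (hmax : ∀ i, Nat.dist (E i : ℕ) (F i : ℕ) ≤ Nat.dist (E j₀ : ℕ) (F j₀ : ℕ))
    (K : Fin d → ∀ i, Fin (n i))
    (hKlo : ∀ j i, i ≠ j → K j i = lo hn E F i)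
    (hKj0 : K j₀ j₀ = lo hn E F j₀) (j : Fin d) :
    ∀ x, l1 x E ≤ l1 x F → x ≠ K j →
      ∃ x', (l1 x' E ≤ l1 x' F) ∧ (gridGraph n).Adj x x'
        ∧ l1 x' (K j) + 1 = l1 x (K j) := by
  intro x hx hne
  by_cases hA : ∃ i, x i ≠ K j i ∧ K j i = lo hn E F i
  · obtain ⟨i, hxi, hKi⟩ := hA
    obtain ⟨v, hadj, hprog, hdir⟩ := step_coord x (K j) i hxi
    refine ⟨_, ?_, hadj, hprog⟩
    refine inV_update E F x i v ?_ hx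
    have hEi := (E i).isLt; have hFi := (F i).isLt
    have hx_lt := (x i).isLt; have hv := v.isLt
    rw [hKi] at hdir
    rcases le_or_gt (E i : ℕ) (F i : ℕ) with h | h
    · have hl : (lo hn E F i : ℕ) = 0 := by simp only [lo, if_pos h]
      rw [hl] at hdir
      unfold Nat.dist; omega
    · have hl : (lo hn E F i : ℕ) = n i - 1 := by
        simp only [lo, if_neg (by omega : ¬ (E i : ℕ) ≤ (F i : ℕ))]
      rw [hl] at hdir
      unfold Nat.dist; omega
  · push_neg at hA
    obtain ⟨i0, hi0⟩ := Function.ne_iff.mp hne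
    have hij : i0 = j := by
      by_contra hc
      exact (hA i0 hi0) (hKlo j i0 hc)
    subst hij
    have hj : i0 ≠ j₀ := by
      rintro rfl
      exact (hA i0 hi0) hKj0
    obtain ⟨v, hadj, hprog, _⟩ := step_coord x (K i0) i0 hi0
    refine ⟨_, ?_, hadj, hprog⟩
    refine mem_of_eq_lo hn E F j₀ i0 hmax hj _ ?_
    intro i hii
    rw [Function.update_of_ne hii]
    have hxi : x i = K i0 i := by
      by_contra hc
      exact (hA i hc) (hKlo i0 i hii)
    rw [hxi]
    exact hKlo i0 i hii

lemma master (j₀ : Fin d)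
    (hmax : ∀ i, Nat.dist (E i : ℕ) (F i : ℕ) ≤ Nat.dist (E j₀ : ℕ) (F j₀ : ℕ))
    (K : Fin d → ∀ i, Fin (n i))
    (hKlo : ∀ j i, i ≠ j → K j i = lo hn E F i)
    (hKj0 : K j₀ j₀ = lo hn E F j₀)
    (hKhi : ∀ j, j ≠ j₀ → K j j = hi' hn E F j) :
    (∀ j, K j ∈ {U | (gridGraph n).dist U E ≤ (gridGraph n).dist U F}) ∧
    resolves ((gridGraph n).induce {U | (gridGraph n).dist U E ≤ (gridGraph n).dist U F})
      {x : {U | (gridGraph n).dist U E ≤ (gridGraph n).dist U F} |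
        ∃ j, (x : ∀ i, Fin (n i)) = K j} ∧
    (∀ (X : {U | (gridGraph n).dist U E ≤ (gridGraph n).dist U F}) (j : Fin d)
        (hj : K j ∈ {U | (gridGraph n).dist U E ≤ (gridGraph n).dist U F}),
      ((gridGraph n).induce {U | (gridGraph n).dist U E ≤ (gridGraph n).dist U F}).dist
          X ⟨K j, hj⟩ = (gridGraph n).dist (X : ∀ i, Fin (n i)) (K j)) := by
  set s := {U | (gridGraph n).dist U E ≤ (gridGraph n).dist U F} with hs_def
  have hsmem : ∀ U, U ∈ s ↔ l1 U E ≤ l1 U F := by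
    intro U
    simp only [hs_def, Set.mem_setOf_eq, grid_dist]
  have hKall : ∀ i, K j₀ i = lo hn E F i := by
    intro i
    by_cases h : i = j₀
    · subst h; exact hKj0
    · exact hKlo j₀ i h
  have hmem : ∀ j, K j ∈ s := by
    intro j
    rw [hsmem]
    by_cases h : j = j₀
    · subst h
      exact mem_base hn E F _ hKall
    · exact mem_of_eq_lo hn E F j₀ j hmax h _ (fun i hi => hKlo j i hi)
  have hstep : ∀ j, ∀ x ∈ s, x ≠ K j →
      ∃ x', x' ∈ s ∧ (gridGraph n).Adj x x' ∧ l1 x' (K j) + 1 = l1 x (K j) := by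
    intro j x hx hne
    obtain ⟨x', h1, h2, h3⟩ :=
      master_step hn E F j₀ hmax K hKlo hKj0 j x ((hsmem x).mp hx) hne
    exact ⟨x', (hsmem x').mpr h1, h2, h3⟩
  have hdist : ∀ (X : s) (j : Fin d) (hj : K j ∈ s),
      ((gridGraph n).induce s).dist X ⟨K j, hj⟩ = l1 (X : ∀ i, Fin (n i)) (K j) := by
    intro X j hj
    exact induce_dist s (K j) hj (hstep j) (X : ∀ i, Fin (n i)) X.2
  refine ⟨hmem, ?_, fun X j hj => by rw [hdist X j hj, grid_dist]⟩
  -- resolving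
  intro a b hab
  by_contra hc
  push_neg at hc
  have hEq : ∀ j, l1 (a : ∀ i, Fin (n i)) (K j) = l1 (b : ∀ i, Fin (n i)) (K j) := by
    intro j
    have := hc ⟨K j, hmem j⟩ ⟨j, rfl⟩
    rwa [hdist a j (hmem j), hdist b j (hmem j)] at this
  have hsplit : ∀ (x : ∀ i, Fin (n i)) (j : Fin d),
      l1 x (K j) = Nat.dist (x j : ℕ) (K j j : ℕ)
        + ∑ i ∈ Finset.univ.erase j, Nat.dist (x i : ℕ) (lo hn E F i : ℕ) := by
    intro x j
    have hcongr : ∑ i ∈ Finset.univ.erase j, Nat.dist (x i : ℕ) (K j i : ℕ)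
        = ∑ i ∈ Finset.univ.erase j, Nat.dist (x i : ℕ) (lo hn E F i : ℕ) :=
      Finset.sum_congr rfl fun i hi => by rw [hKlo j i (Finset.mem_erase.mp hi).1]
    rw [l1, ← Finset.add_sum_erase _ _ (Finset.mem_univ j), hcongr]
  have hsplit0 : ∀ (x : ∀ i, Fin (n i)) (i : Fin d),
      l1 x (K j₀) = Nat.dist (x i : ℕ) (lo hn E F i : ℕ)
        + ∑ k ∈ Finset.univ.erase i, Nat.dist (x k : ℕ) (lo hn E F k : ℕ) := by
    intro x i
    have hcongr : ∑ k ∈ Finset.univ.erase i, Nat.dist (x k : ℕ) (K j₀ k : ℕ)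
        = ∑ k ∈ Finset.univ.erase i, Nat.dist (x k : ℕ) (lo hn E F k : ℕ) :=
      Finset.sum_congr rfl fun k _ => by rw [hKall k]
    rw [l1, ← Finset.add_sum_erase _ _ (Finset.mem_univ i), hcongr, hKall i]
  have hcoordne : ∀ i, i ≠ j₀ → (a : ∀ i, Fin (n i)) i = (b : ∀ i, Fin (n i)) i := by
    intro i hi
    have e1 := hEq i
    have e0 := hEq j₀
    rw [hsplit (a : ∀ i, Fin (n i)) i, hsplit (b : ∀ i, Fin (n i)) i,
      hKhi i hi] at e1
    rw [hsplit0 (a : ∀ i, Fin (n i)) i, hsplit0 (b : ∀ i, Fin (n i)) i] at e0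
    have ha := lo_hi hn E F i ((a : ∀ i, Fin (n i)) i)
    have hb := lo_hi hn E F i ((b : ∀ i, Fin (n i)) i)
    refine lo_inj hn E F i _ _ ?_
    omega
  have hj0 : (a : ∀ i, Fin (n i)) j₀ = (b : ∀ i, Fin (n i)) j₀ := by
    have e0 := hEq j₀
    rw [hsplit0 (a : ∀ i, Fin (n i)) j₀, hsplit0 (b : ∀ i, Fin (n i)) j₀] at e0
    have hsum_eq : ∑ k ∈ Finset.univ.erase j₀,
          Nat.dist ((a : ∀ i, Fin (n i)) k : ℕ) (lo hn E F k : ℕ)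
        = ∑ k ∈ Finset.univ.erase j₀,
          Nat.dist ((b : ∀ i, Fin (n i)) k : ℕ) (lo hn E F k : ℕ) :=
      Finset.sum_congr rfl fun k hk => by
        rw [hcoordne k (Finset.mem_erase.mp hk).1]
    refine lo_inj hn E F j₀ _ _ ?_
    omega
  refine hab (Subtype.ext (funext fun i => ?_))
  by_cases h : i = j₀
  · subst h; exact hj0
  · exact hcoordne i h

end Stmt10Aux

/-- Lemma 3: for the `d`-dimensional grid `G`, vertices `E ≠ F`, and
`V₁ = {U : d_G(U,E) ≤ d_G(U,F)}` with induced subgraph `G₁`, we have `β(G₁) ≤ d`.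
Moreover, when the coordinates are labelled so that the gap along the first
coordinate is maximal (`∀ i, x_F⁽ⁱ⁾ − x_E⁽ⁱ⁾ ≤ x_F⁽¹⁾ − x_E⁽¹⁾`) and reflected so
that `x_E⁽ⁱ⁾ ≤ x_F⁽ⁱ⁾` for all `i`, the `d` corners `O j` all lie in `V₁`, they form
a resolving set of `G₁`, and `d_{G₁}(X, O j) = d_G(X, O j)` for every `X ∈ V₁`. -/


theorem stmt_10 {d : ℕ} (hd : 0 < d) (n : Fin d → ℕ) (hn : ∀ i, 0 < n i)
    (E F : ∀ i, Fin (n i)) (hne : E ≠ F) :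
    metricDim ((gridGraph n).induce
        {U | (gridGraph n).dist U E ≤ (gridGraph n).dist U F}) ≤ d ∧
    ((∀ i, (E i : ℕ) ≤ (F i : ℕ)) →
      (∀ i, (F i : ℕ) - (E i : ℕ) ≤ (F ⟨0, hd⟩ : ℕ) - (E ⟨0, hd⟩ : ℕ)) →
      (∀ j, gridCorner n hn j ∈
          {U | (gridGraph n).dist U E ≤ (gridGraph n).dist U F}) ∧
      resolves ((gridGraph n).induce
          {U | (gridGraph n).dist U E ≤ (gridGraph n).dist U F})
        {x : {U | (gridGraph n).dist U E ≤ (gridGraph n).dist U F} |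
          ∃ j, (x : ∀ i, Fin (n i)) = gridCorner n hn j} ∧
      (∀ (X : {U | (gridGraph n).dist U E ≤ (gridGraph n).dist U F}) (j : Fin d)
          (hj : gridCorner n hn j ∈
            {U | (gridGraph n).dist U E ≤ (gridGraph n).dist U F}),
        ((gridGraph n).induce
            {U | (gridGraph n).dist U E ≤ (gridGraph n).dist U F}).dist
            X ⟨gridCorner n hn j, hj⟩ =
          (gridGraph n).dist (X : ∀ i, Fin (n i)) (gridCorner n hn j))) := by
  classical
  constructor
  · -- metric dimension bound
    obtain ⟨j₀, -, hmax⟩ := Finset.exists_max_image Finset.univ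
      (fun i => Nat.dist (E i : ℕ) (F i : ℕ)) ⟨⟨0, hd⟩, Finset.mem_univ _⟩
    set K : Fin d → ∀ i, Fin (n i) := fun j i =>
      if i = j ∧ j ≠ j₀ then Stmt10Aux.hi' hn E F i else Stmt10Aux.lo hn E F i with hK
    have hKlo : ∀ j i, i ≠ j → K j i = Stmt10Aux.lo hn E F i := by
      intro j i h
      simp only [hK]
      rw [if_neg (fun hc => h hc.1)]
    have hKj0 : K j₀ j₀ = Stmt10Aux.lo hn E F j₀ := by
      simp only [hK]
      rw [if_neg (fun hc => hc.2 rfl)]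
    have hKhi : ∀ j, j ≠ j₀ → K j j = Stmt10Aux.hi' hn E F j := by
      intro j h
      simp only [hK]
      rw [if_pos ⟨trivial, h⟩]
    obtain ⟨hmem, hres, -⟩ := Stmt10Aux.master hn E F j₀
      (fun i => hmax i (Finset.mem_univ i)) K hKlo hKj0 hKhi
    set R : Finset {U | (gridGraph n).dist U E ≤ (gridGraph n).dist U F} :=
      Finset.image (fun j => (⟨K j, hmem j⟩ :
        {U | (gridGraph n).dist U E ≤ (gridGraph n).dist U F})) Finset.univ with hR
    have hresR : resolves ((gridGraph n).induce
        {U | (gridGraph n).dist U E ≤ (gridGraph n).dist U F}) (R : Set _) := by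
      intro a b hab
      obtain ⟨x, ⟨j, hj⟩, hd2⟩ := hres a b hab
      refine ⟨x, ?_, hd2⟩
      rw [Finset.mem_coe, hR, Finset.mem_image]
      exact ⟨j, Finset.mem_univ _, Subtype.ext hj.symm⟩
    calc metricDim ((gridGraph n).induce
          {U | (gridGraph n).dist U E ≤ (gridGraph n).dist U F})
        ≤ R.card := Nat.sInf_le ⟨R, rfl, hresR⟩
      _ ≤ (Finset.univ : Finset (Fin d)).card := Finset.card_image_le
      _ = d := by simp
  · intro h1 h2
    have hmax : ∀ i, Nat.dist (E i : ℕ) (F i : ℕ)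
        ≤ Nat.dist (E ⟨0, hd⟩ : ℕ) (F ⟨0, hd⟩ : ℕ) := by
      intro i
      have ha := h1 i; have hb := h1 ⟨0, hd⟩; have hc := h2 i
      unfold Nat.dist; omega
    have hlo : ∀ i, Stmt10Aux.lo hn E F i = ⟨0, hn i⟩ := fun i => by
      simp only [Stmt10Aux.lo, if_pos (h1 i)]
    have hKlo : ∀ j i, i ≠ j → gridCorner n hn j i = Stmt10Aux.lo hn E F i := by
      intro j i h
      rw [hlo i]
      simp only [gridCorner]
      rw [if_neg (fun hc : _ ∧ _ => h (Fin.ext hc.1))]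
    have hKj0 : gridCorner n hn ⟨0, hd⟩ ⟨0, hd⟩ = Stmt10Aux.lo hn E F ⟨0, hd⟩ := by
      rw [hlo ⟨0, hd⟩]
      simp only [gridCorner]
      rw [if_neg]
      rintro ⟨-, hc⟩
      exact hc rfl
    have hKhi : ∀ j, j ≠ ⟨0, hd⟩ → gridCorner n hn j j = Stmt10Aux.hi' hn E F j := by
      intro j h
      have hjv : (j : ℕ) ≠ 0 := fun hc => h (Fin.ext hc)
      simp only [gridCorner, Stmt10Aux.hi']
      rw [if_pos ⟨trivial, hjv⟩, if_pos (h1 j)]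
    exact Stmt10Aux.master hn E F ⟨0, hd⟩ hmax (gridCorner n hn) hKlo hKj0 hKhi
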